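/- Let Λ be a moment functional on the Hermitian matrix polynomials H_q(E) having a finitely atomic representing measure ν = M₀δ_{x₀} + Σ_{j=1}^k M_jδ_{x_j}. Suppose there exists f ∈ E with f(x) ≥ 0 for all x ∈ 𝒳, f(x₀) > 0 and f(x₁) = … = f(x_k) = 0. Then M₀ is the largest mass of Λ at x₀: every representing measure μ of Λ satisfies μ({x₀}) ⪯ M₀. -/

import Mathlib

open Matrix
open scoped ComplexOrder

variable {X : Type*} {q : ℕ}

/-- The set `H_q(E)` of Hermitian `q × q` matrix functions with entries from `E + iE`. -/
def HqESet (E : Submodule ℝ (X → ℝ)) (q : ℕ) : Set (X → Matrix (Fin q) (Fin q) ℂ) :=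
  {F | (∀ x, (F x).IsHermitian) ∧
    ∀ i j : Fin q, ∃ g ∈ E, ∃ h ∈ E, ∀ x, F x i j = (g x : ℂ) + (h x : ℂ) * Complex.I}


lemma trace_vecMulVec_mul (N : Matrix (Fin q) (Fin q) ℂ) (v : Fin q → ℂ) :
    (vecMulVec v (star v) * N).trace = star v ⬝ᵥ N *ᵥ v := by
  simp only [Matrix.trace, Matrix.diag, Matrix.mul_apply, vecMulVec_apply, dotProduct,
    Matrix.mulVec, Pi.star_apply, Finset.mul_sum]
  rw [Finset.sum_comm]
  apply Finset.sum_congr rfl; intro j _; apply Finset.sum_congr rfl; intro i _; ring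

lemma smul_vecMulVec_mem (E : Submodule ℝ (X → ℝ)) (f : X → ℝ) (hfE : f ∈ E) (v : Fin q → ℂ) :
    (fun y => (f y : ℂ) • vecMulVec v (star v)) ∈ HqESet E q := by
  have hA : (vecMulVec v (star v)).IsHermitian := by
    ext i j
    simp [Matrix.conjTranspose_apply, vecMulVec_apply, mul_comm]
  constructor
  · intro y
    show (((f y : ℂ)) • vecMulVec v (star v)).IsHermitian
    unfold Matrix.IsHermitian
    rw [Matrix.conjTranspose_smul, hA.eq]
    simp [Complex.star_def, Complex.conj_ofReal]
  · intro i j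
    refine ⟨(v i * (starRingEnd ℂ) (v j)).re • f, E.smul_mem _ hfE,
      (v i * (starRingEnd ℂ) (v j)).im • f, E.smul_mem _ hfE, fun y => ?_⟩
    simp only [Pi.smul_apply, smul_eq_mul, Matrix.smul_apply, vecMulVec_apply, Pi.star_apply,
      Complex.ofReal_mul, smul_eq_mul]
    simp only [Complex.ext_iff, Complex.star_def, Complex.add_re, Complex.add_im, Complex.mul_re,
      Complex.mul_im, Complex.ofReal_re, Complex.ofReal_im, Complex.I_re, Complex.I_im,
      Complex.conj_re, Complex.conj_im]
    constructor <;> ring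

/-- Let `Λ` be a moment functional on `H_q(E)` with finitely atomic representing measure
`ν = M₀ δ_{x₀} + ∑_{j=1}^k M_j δ_{x_j}` (pairwise distinct atoms).  If some `f ∈ E` satisfies
`f ≥ 0` on `𝒳`, `f(x₀) > 0` and `f(x₁) = ⋯ = f(x_k) = 0`, then `M₀` is the largest mass of `Λ`
at `x₀`:  every representing measure `μ` of `Λ` satisfies `μ({x₀}) ⪯ M₀`. -/
theorem largest_mass_of_separating_function (E : Submodule ℝ (X → ℝ))
    (hfin : FiniteDimensional ℝ E)
    (Λ : (X → Matrix (Fin q) (Fin q) ℂ) → ℝ)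
    (k : ℕ) (x : Fin (k + 1) → X) (hx : Function.Injective x)
    (M : Fin (k + 1) → Matrix (Fin q) (Fin q) ℂ) (hM : ∀ j, (M j).PosSemidef)
    (hν : ∀ F ∈ HqESet E q, Λ F = ∑ j, ((F (x j)) * (M j)).trace.re)
    (f : X → ℝ) (hfE : f ∈ E) (hf0 : ∀ y, 0 ≤ f y)
    (hfx0 : 0 < f (x 0)) (hfz : ∀ j, j ≠ 0 → f (x j) = 0)
    (μ : X →₀ Matrix (Fin q) (Fin q) ℂ) (hμpsd : ∀ y, (μ y).PosSemidef)
    (hμ : ∀ F ∈ HqESet E q, Λ F = μ.sum fun y N => ((F y) * N).trace.re) :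
    (M 0 - μ (x 0)).PosSemidef := by
  rw [posSemidef_iff_dotProduct_mulVec]
  constructor
  · exact ((hM 0).1).sub ((hμpsd (x 0)).1)
  intro v
  set A := vecMulVec v (star v) with hA
  set F : X → Matrix (Fin q) (Fin q) ℂ := fun y => (f y : ℂ) • A with hFdef
  have hF : F ∈ HqESet E q := smul_vecMulVec_mem E f hfE v
  have hterm : ∀ (y : X) (N : Matrix (Fin q) (Fin q) ℂ),
      ((F y) * N).trace.re = f y * (star v ⬝ᵥ N *ᵥ v).re := by
    intro y N
    have : (F y) * N = (f y : ℂ) • (A * N) := Matrix.smul_mul _ _ _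
    rw [this, Matrix.trace_smul, smul_eq_mul, Complex.re_ofReal_mul,
      trace_vecMulVec_mul]
  have hre_nonneg : ∀ y, 0 ≤ (star v ⬝ᵥ (μ y) *ᵥ v).re := by
    intro y
    have h := (hμpsd y).dotProduct_mulVec_nonneg v
    simpa using (Complex.le_def.mp h).1
  have him : ∀ (N : Matrix (Fin q) (Fin q) ℂ), N.PosSemidef →
      (star v ⬝ᵥ N *ᵥ v).im = 0 := by
    intro N hN
    have h := hN.dotProduct_mulVec_nonneg v
    simpa using (Complex.le_def.mp h).2.symm
  -- compute Λ F via ν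
  have h1 : Λ F = f (x 0) * (star v ⬝ᵥ (M 0) *ᵥ v).re := by
    rw [hν F hF]
    rw [Fintype.sum_eq_single 0 (fun j hj => by rw [hterm, hfz j hj, zero_mul])]
    exact hterm _ _
  -- lower bound for Λ F via μ
  have h2 : f (x 0) * (star v ⬝ᵥ (μ (x 0)) *ᵥ v).re ≤ Λ F := by
    rw [hμ F hF]
    unfold Finsupp.sum
    have hnn : ∀ y ∈ μ.support, 0 ≤ ((F y) * (μ y)).trace.re := by
      intro y _
      rw [hterm]
      exact mul_nonneg (hf0 y) (hre_nonneg y)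
    by_cases hmem : x 0 ∈ μ.support
    · have := Finset.single_le_sum hnn hmem
      rwa [hterm] at this
    · have h0 : μ (x 0) = 0 := Finsupp.notMem_support_iff.mp hmem
      rw [h0]
      simp only [Matrix.zero_mulVec, dotProduct_zero, Complex.zero_re, mul_zero]
      exact Finset.sum_nonneg hnn
  have hle : (star v ⬝ᵥ (μ (x 0)) *ᵥ v).re ≤ (star v ⬝ᵥ (M 0) *ᵥ v).re :=
    le_of_mul_le_mul_left (h1 ▸ h2) hfx0
  rw [Matrix.sub_mulVec, dotProduct_sub, Complex.le_def]
  constructor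
  · simp only [Complex.zero_re, Complex.sub_re]
    linarith
  · simp only [Complex.zero_im, Complex.sub_im, him _ (hM 0), him _ (hμpsd (x 0)), sub_zero]
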